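/- For all positive integers h and k, (k/h)^h ≤ n(h,k), where n(h,k) is the largest N such that some set A of k non-negative integers is an h-basis for [0,N]. Equivalently, there exists a set A with |A| ≤ k and 0 ∈ A such that every integer in [0, ⌊k/h⌋^h - 1] is a sum of h elements of A. -/

import Mathlib

lemma digits_sum_aux (m : ℕ) (hm : 0 < m) (h z : ℕ) :
    ∑ i ∈ Finset.range h, z / m ^ i % m * m ^ i = z % m ^ h := by
  induction h with
  | zero => simp [Nat.mod_one]
  | succ n ih =>
      rw [Finset.sum_range_succ, ih, pow_succ, Nat.mod_mul]
      ring

/-- For all positive integers `h` and `k`, `(k/h)^h ≤ n(h,k)`: there exists a set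
`A` with `|A| ≤ k` and `0 ∈ A` such that every integer in `[0, ⌊k/h⌋^h - 1]` is a sum of `h`
elements of `A`. -/
theorem stmt2 (h k : ℕ) (hh : 0 < h) (hk : 0 < k) :
    ∃ A : Finset ℕ, A.card ≤ k ∧ 0 ∈ A ∧
      ∀ z ≤ (k / h) ^ h - 1, ∃ f : Fin h → ℕ, (∀ i, f i ∈ A) ∧ ∑ i, f i = z := by
  set m := k / h with hm
  refine ⟨insert 0 ((Finset.range h ×ˢ Finset.Ico 1 m).image fun p => p.2 * m ^ p.1), ?_, by simp, ?_⟩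
  · calc (insert 0 ((Finset.range h ×ˢ Finset.Ico 1 m).image fun p => p.2 * m ^ p.1)).card
        ≤ ((Finset.range h ×ˢ Finset.Ico 1 m).image fun p => p.2 * m ^ p.1).card + 1 :=
          Finset.card_insert_le _ _
      _ ≤ (Finset.range h ×ˢ Finset.Ico 1 m).card + 1 := by
          exact Nat.add_le_add_right (Finset.card_image_le) 1
      _ = h * (m - 1) + 1 := by simp [Finset.card_product, Nat.card_Ico]
      _ ≤ k := by
          have h1 : m * h ≤ k := Nat.div_mul_le_self k h
          rcases Nat.eq_zero_or_pos m with h0 | h0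
          · simp [h0]; omega
          · have : h * (m - 1) + 1 ≤ h * m := by
              have := Nat.mul_le_mul_left h (Nat.one_le_iff_ne_zero.mpr (by omega) : 1 ≤ m)
              nlinarith [Nat.sub_add_cancel h0]
            nlinarith
  · intro z hz
    rcases Nat.eq_zero_or_pos m with h0 | h0
    · have : z = 0 := by
        have : (0:ℕ) ^ h = 0 := Nat.zero_pow hh
        simp [h0, this] at hz; omega
      exact ⟨fun _ => 0, fun i => by simp, by simp [this]⟩
    · have hzlt : z < m ^ h := by
        have : 0 < m ^ h := pow_pos h0 h
        omega
      refine ⟨fun i => z / m ^ (i : ℕ) % m * m ^ (i : ℕ), ?_, ?_⟩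
      · intro i
        rcases Nat.eq_zero_or_pos (z / m ^ (i : ℕ) % m) with hd | hd
        · simp [hd]
        · apply Finset.mem_insert_of_mem
          apply Finset.mem_image.mpr
          exact ⟨((i : ℕ), z / m ^ (i : ℕ) % m), by
            simp [Finset.mem_product, Finset.mem_Ico, i.2, Nat.mod_lt _ h0]; omega, rfl⟩
      · rw [Fin.sum_univ_eq_sum_range (fun i => z / m ^ i % m * m ^ i)]
        rw [digits_sum_aux m h0 h z, Nat.mod_eq_of_lt hzlt]
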